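/- Let x̄ be a feasible solution of the ENLP and λ̄ ∈ Λ_com(x̄). If the solution map S_KKT is isolatedly calm at ((0,0),(x̄,λ̄)), then Λ_com(x̄) = {λ̄}, i.e., λ̄ is the unique Lagrange multiplier corresponding to x̄. -/

import Mathlib

open Filter Topology Metric Set Pointwise
open scoped RealInnerProductSpace

noncomputable section

/-- Euclidean space ℝ^k. -/
abbrev Evec (k : ℕ) : Type := EuclideanSpace ℝ (Fin k)

/-- The Bouligand tangent cone to `Ω` at `z`: limits of `α_k (z_k - z)` with
`z_k → z` in `Ω` and `α_k ≥ 0`. -/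
def bTangentCone {F : Type*} [NormedAddCommGroup F] [NormedSpace ℝ F]
    (Ω : Set F) (z : F) : Set F :=
  {w | ∃ (zs : ℕ → F) (a : ℕ → ℝ), (∀ k, zs k ∈ Ω) ∧ (∀ k, 0 ≤ a k) ∧
    Tendsto zs atTop (𝓝 z) ∧ Tendsto (fun k => a k • (zs k - z)) atTop (𝓝 w)}

/-- Graph of a set-valued mapping. -/
def svGraph {A B : Type*} (F : A → Set B) : Set (A × B) := {p | p.2 ∈ F p.1}

/-- Graphical derivative of a set-valued mapping at `(z, w)` in direction `u`. -/
def gDeriv {A B : Type*} [NormedAddCommGroup A] [NormedSpace ℝ A]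
    [NormedAddCommGroup B] [NormedSpace ℝ B]
    (F : A → Set B) (z : A) (w : B) (u : A) : Set B :=
  {v | (u, v) ∈ bTangentCone (svGraph F) (z, w)}

/-- A convex polyhedral set: a finite intersection of closed half-spaces. -/
def IsPolyhedral {k : ℕ} (Y : Set (Evec k)) : Prop :=
  ∃ (p : ℕ) (b : Fin p → Evec k) (c : Fin p → ℝ), Y = {y | ∀ i, ⟪b i, y⟫ ≤ c i}

/-- The piecewise linear-quadratic penalty θ_{Y,B}. -/
def thetaY {k : ℕ} (Y : Set (Evec k)) (B : Evec k →L[ℝ] Evec k) (u : Evec k) : EReal :=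
  ⨆ y ∈ Y, ((⟪y, u⟫ - (1 / 2) * ⟪y, B y⟫ : ℝ) : EReal)

/-- Subdifferential of convex analysis of an extended-real-valued function. -/
def subdiff {k : ℕ} (θ : Evec k → EReal) (z : Evec k) : Set (Evec k) :=
  {v | ∀ u, θ z + ((⟪v, u - z⟫ : ℝ) : EReal) ≤ θ u}

/-- Polar cone. -/
def polarCone {k : ℕ} (K : Set (Evec k)) : Set (Evec k) :=
  {v | ∀ w ∈ K, ⟪v, w⟫ ≤ 0}

/-- Normal cone of convex analysis. -/
def convNormalCone {k : ℕ} (Ω : Set (Evec k)) (z : Evec k) : Set (Evec k) :=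
  {v | ∀ w ∈ Ω, ⟪v, w - z⟫ ≤ 0}

/-- The critical cone K = T_Y(lmo) ∩ {zo - Blmo}^⊥. -/
def critCone {k : ℕ} (Y : Set (Evec k)) (B : Evec k →L[ℝ] Evec k)
    (zo lmo : Evec k) : Set (Evec k) :=
  bTangentCone Y lmo ∩ {w | ⟪zo - B lmo, w⟫ = 0}

/-- Calmness of a set-valued mapping at a graph point. -/
def Calm {A B : Type*} [NormedAddCommGroup A] [NormedAddCommGroup B]
    (F : A → Set B) (zo : A) (wo : B) : Prop :=
  ∃ ℓ : ℝ, 0 ≤ ℓ ∧ ∃ U ∈ 𝓝 zo, ∃ V ∈ 𝓝 wo,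
    ∀ z ∈ U, ∀ w ∈ F z ∩ V, ∃ w' ∈ F zo, ‖w - w'‖ ≤ ℓ * ‖z - zo‖

/-- Isolated calmness of a set-valued mapping at a graph point. -/
def IsolCalm {A B : Type*} [NormedAddCommGroup A] [NormedAddCommGroup B]
    (F : A → Set B) (zo : A) (wo : B) : Prop :=
  ∃ ℓ : ℝ, 0 ≤ ℓ ∧ ∃ U ∈ 𝓝 zo, ∃ V ∈ 𝓝 wo,
    ∀ z ∈ U, ∀ w ∈ F z ∩ V, ‖w - wo‖ ≤ ℓ * ‖z - zo‖

/-- Robust isolated calmness of a set-valued mapping at a graph point. -/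
def RobIsolCalm {A B : Type*} [NormedAddCommGroup A] [NormedAddCommGroup B]
    (F : A → Set B) (zo : A) (wo : B) : Prop :=
  ∃ ℓ : ℝ, 0 ≤ ℓ ∧ ∃ U ∈ 𝓝 zo, ∃ V ∈ 𝓝 wo,
    (∀ z ∈ U, ∀ w ∈ F z ∩ V, ‖w - wo‖ ≤ ℓ * ‖z - zo‖) ∧
    ∀ z ∈ U, (F z ∩ V).Nonempty

/-- Lipschitz-like (Aubin) property of a set-valued mapping around a graph point. -/
def LipLike {A B : Type*} [NormedAddCommGroup A] [NormedAddCommGroup B]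
    (F : A → Set B) (zo : A) (wo : B) : Prop :=
  ∃ ℓ : ℝ, 0 ≤ ℓ ∧ ∃ U ∈ 𝓝 zo, ∃ V ∈ 𝓝 wo,
    ∀ z ∈ U, ∀ z' ∈ U, ∀ w ∈ F z' ∩ V, ∃ w' ∈ F z, ‖w - w'‖ ≤ ℓ * ‖z' - z‖

/-! ### The general variational system -/

/-- Ψ(x,λ) = f(x) + ∇Φ(x)*λ. -/
def Psi {n m : ℕ} (f : Evec n → Evec n) (Φ : Evec n → Evec m)
    (x : Evec n) (lam : Evec m) : Evec n :=
  f x + ContinuousLinearMap.adjoint (fderiv ℝ Φ x) lam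

/-- Lagrange multipliers Λ(xo) of the variational system. -/
def LagMult {n m : ℕ} (Y : Set (Evec m)) (B : Evec m →L[ℝ] Evec m)
    (f : Evec n → Evec n) (Φ : Evec n → Evec m) (xo : Evec n) : Set (Evec m) :=
  {lam | Psi f Φ xo lam = 0 ∧ lam ∈ subdiff (thetaY Y B) (Φ xo)}

/-- Solution map of the canonically perturbed variational system. -/
def SolMap {n m : ℕ} (Y : Set (Evec m)) (B : Evec m →L[ℝ] Evec m)
    (f : Evec n → Evec n) (Φ : Evec n → Evec m) :
    Evec n × Evec m → Set (Evec n × Evec m) :=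
  fun p => {q | Psi f Φ q.1 q.2 = p.1 ∧ q.2 ∈ subdiff (thetaY Y B) (Φ q.1 + p.2)}

/-- Multiplier map associated with xo. -/
def MultMap {n m : ℕ} (Y : Set (Evec m)) (B : Evec m →L[ℝ] Evec m)
    (f : Evec n → Evec n) (Φ : Evec n → Evec m) (xo : Evec n) :
    Evec n × Evec m → Set (Evec m) :=
  fun p => {lam | Psi f Φ xo lam = p.1 ∧ lam ∈ subdiff (thetaY Y B) (Φ xo + p.2)}

/-- lmo is a critical Lagrange multiplier for the variational system. -/
def IsCriticalMult {n m : ℕ} (Y : Set (Evec m)) (B : Evec m →L[ℝ] Evec m)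
    (f : Evec n → Evec n) (Φ : Evec n → Evec m) (xo : Evec n) (lmo : Evec m) : Prop :=
  ∃ ξ : Evec n, ξ ≠ 0 ∧
    ∃ η ∈ gDeriv (subdiff (thetaY Y B)) (Φ xo) lmo (fderiv ℝ Φ xo ξ),
      fderiv ℝ (fun x => Psi f Φ x lmo) xo ξ +
        ContinuousLinearMap.adjoint (fderiv ℝ Φ xo) η = 0

/-- lmo is a noncritical Lagrange multiplier for the variational system. -/
def IsNoncriticalMult {n m : ℕ} (Y : Set (Evec m)) (B : Evec m →L[ℝ] Evec m)
    (f : Evec n → Evec n) (Φ : Evec n → Evec m) (xo : Evec n) (lmo : Evec m) : Prop :=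
  ∀ ξ : Evec n, ∀ η ∈ gDeriv (subdiff (thetaY Y B)) (Φ xo) lmo (fderiv ℝ Φ xo ξ),
    fderiv ℝ (fun x => Psi f Φ x lmo) xo ξ +
      ContinuousLinearMap.adjoint (fderiv ℝ Φ xo) η = 0 → ξ = 0

/-- `u` is the proximal point of `θ` at `z`. -/
def IsProxPt {k : ℕ} (θ : Evec k → EReal) (z u : Evec k) : Prop :=
  ∀ w, θ u + ((1 / 2 * ‖z - u‖ ^ 2 : ℝ) : EReal) ≤ θ w + ((1 / 2 * ‖z - w‖ ^ 2 : ℝ) : EReal)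

/-! ### ENLP -/

/-- The Lagrangian of the ENLP. -/
def Lag {n m : ℕ} (B : Evec m →L[ℝ] Evec m) (φ₀ : Evec n → ℝ) (Φ : Evec n → Evec m)
    (x : Evec n) (lam : Evec m) : ℝ :=
  φ₀ x + ⟪Φ x, lam⟫ - (1 / 2) * ⟪lam, B lam⟫

/-- The essential objective φ = φ₀ + θ∘Φ of the ENLP. -/
def enlpPhi {n m : ℕ} (Y : Set (Evec m)) (B : Evec m →L[ℝ] Evec m)
    (φ₀ : Evec n → ℝ) (Φ : Evec n → Evec m) (x : Evec n) : EReal :=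
  ((φ₀ x : ℝ) : EReal) + thetaY Y B (Φ x)

/-- Lagrange multipliers of the ENLP KKT system. -/
def LagMultCom {n m : ℕ} (Y : Set (Evec m)) (B : Evec m →L[ℝ] Evec m)
    (φ₀ : Evec n → ℝ) (Φ : Evec n → Evec m) (xo : Evec n) : Set (Evec m) :=
  {lam | gradient (fun x => Lag B φ₀ Φ x lam) xo = 0 ∧
    lam ∈ subdiff (thetaY Y B) (Φ xo)}

/-- Solution map of the canonically perturbed KKT system of the ENLP. -/
def SKKT {n m : ℕ} (Y : Set (Evec m)) (B : Evec m →L[ℝ] Evec m)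
    (φ₀ : Evec n → ℝ) (Φ : Evec n → Evec m) :
    Evec n × Evec m → Set (Evec n × Evec m) :=
  fun p => {q | gradient (fun x => Lag B φ₀ Φ x q.2) q.1 = p.1 ∧
    q.2 ∈ subdiff (thetaY Y B) (Φ q.1 + p.2)}

/-- The Hessian ∇²_{xx}L(xo,lmo) as a continuous linear map. -/
def hessL {n m : ℕ} (B : Evec m →L[ℝ] Evec m) (φ₀ : Evec n → ℝ) (Φ : Evec n → Evec m)
    (xo : Evec n) (lmo : Evec m) : Evec n →L[ℝ] Evec n :=
  fderiv ℝ (fun x => gradient (fun x' => Lag B φ₀ Φ x' lmo) x) xo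

/-- lmo is a noncritical multiplier of the KKT system of the ENLP. -/
def IsNoncriticalENLP {n m : ℕ} (Y : Set (Evec m)) (B : Evec m →L[ℝ] Evec m)
    (φ₀ : Evec n → ℝ) (Φ : Evec n → Evec m) (xo : Evec n) (lmo : Evec m) : Prop :=
  ∀ ξ : Evec n, ∀ η ∈ gDeriv (subdiff (thetaY Y B)) (Φ xo) lmo (fderiv ℝ Φ xo ξ),
    hessL B φ₀ Φ xo lmo ξ + ContinuousLinearMap.adjoint (fderiv ℝ Φ xo) η = 0 → ξ = 0

/-- The second-order sufficient condition for the ENLP at (xo,lmo). -/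
def SOSC {n m : ℕ} (Y : Set (Evec m)) (B : Evec m →L[ℝ] Evec m)
    (φ₀ : Evec n → ℝ) (Φ : Evec n → Evec m) (xo : Evec n) (lmo : Evec m) : Prop :=
  ∀ w : Evec n, w ≠ 0 →
    fderiv ℝ Φ xo w ∈ polarCone (critCone Y B (Φ xo) lmo) + Set.range (⇑B) →
    0 < ((⟪hessL B φ₀ Φ xo lmo w, w⟫ : ℝ) : EReal) +
      2 * thetaY (critCone Y B (Φ xo) lmo) B (fderiv ℝ Φ xo w)

/-- xo is a local optimal solution of the ENLP. -/
def IsLocalOptENLP {n m : ℕ} (Y : Set (Evec m)) (B : Evec m →L[ℝ] Evec m)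
    (φ₀ : Evec n → ℝ) (Φ : Evec n → Evec m) (xo : Evec n) : Prop :=
  ∃ ε > (0 : ℝ), ∀ x ∈ Metric.closedBall xo ε,
    enlpPhi Y B φ₀ Φ xo ≤ enlpPhi Y B φ₀ Φ x

/-- The second subderivative d²φ(xo,vo)(wo). -/
def secondSubderiv {k : ℕ} (φ : Evec k → EReal) (xo vo wo : Evec k) : EReal :=
  Filter.liminf
    (fun p : ℝ × Evec k =>
      ((2 / p.1 ^ 2 : ℝ) : EReal) *
        (φ (xo + p.1 • p.2) - φ xo - ((p.1 * ⟪vo, p.2⟫ : ℝ) : EReal)))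
    ((𝓝[>] (0 : ℝ)) ×ˢ 𝓝 wo)

/-- The perturbed objective of the ENLP. -/
def pObj {n m : ℕ} (Y : Set (Evec m)) (B : Evec m →L[ℝ] Evec m)
    (φ₀ : Evec n → ℝ) (Φ : Evec n → Evec m) (p : Evec n × Evec m) (x : Evec n) : EReal :=
  ((φ₀ x - ⟪p.1, x⟫ : ℝ) : EReal) + thetaY Y B (Φ x + p.2)

/-- xo is a fully stable local optimal solution of the ENLP. -/
def FullyStable {n m : ℕ} (Y : Set (Evec m)) (B : Evec m →L[ℝ] Evec m)
    (φ₀ : Evec n → ℝ) (Φ : Evec n → Evec m) (xo : Evec n) : Prop :=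
  ∃ γ > (0 : ℝ), ∃ U ∈ 𝓝 (0 : Evec n), ∃ W ∈ 𝓝 (0 : Evec m),
    ∃ (g : Evec n × Evec m → Evec n) (mg : Evec n × Evec m → ℝ) (ℓ : ℝ), 0 ≤ ℓ ∧
      g (0, 0) = xo ∧
      (∀ p ∈ U ×ˢ W,
        {x : Evec n | ‖x - xo‖ ≤ γ ∧ ∀ x', ‖x' - xo‖ ≤ γ →
          pObj Y B φ₀ Φ p x ≤ pObj Y B φ₀ Φ p x'} = {g p}) ∧
      (∀ p ∈ U ×ˢ W, ∀ q ∈ U ×ˢ W, ‖g p - g q‖ ≤ ℓ * ‖p - q‖) ∧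
      (∀ p ∈ U ×ˢ W,
        sInf (pObj Y B φ₀ Φ p '' {x | ‖x - xo‖ ≤ γ}) = ((mg p : ℝ) : EReal)) ∧
      (∀ p ∈ U ×ˢ W, ∀ q ∈ U ×ˢ W, |mg p - mg q| ≤ ℓ * ‖p - q‖)

/-! ### Normal cones and coderivatives on products -/

/-- Regular (Fréchet) normal cone to a subset of ℝ^a × ℝ^b. -/
def regNormalCone2 {a b : ℕ} (Ω : Set (Evec a × Evec b)) (z : Evec a × Evec b) :
    Set (Evec a × Evec b) :=
  {v | ∀ ε > (0 : ℝ), ∃ δ > (0 : ℝ), ∀ w ∈ Ω, ‖w - z‖ < δ →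
    ⟪v.1, w.1 - z.1⟫ + ⟪v.2, w.2 - z.2⟫ ≤ ε * ‖w - z‖}

/-- Limiting (Mordukhovich) normal cone to a subset of ℝ^a × ℝ^b. -/
def limNormalCone2 {a b : ℕ} (Ω : Set (Evec a × Evec b)) (z : Evec a × Evec b) :
    Set (Evec a × Evec b) :=
  {v | ∃ (zs vs : ℕ → Evec a × Evec b), (∀ k, zs k ∈ Ω) ∧
    (∀ k, vs k ∈ regNormalCone2 Ω (zs k)) ∧
    Tendsto zs atTop (𝓝 z) ∧ Tendsto vs atTop (𝓝 v)}

/-- Coderivative of a set-valued mapping between Euclidean spaces. -/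
def coDeriv {a b : ℕ} (F : Evec a → Set (Evec b)) (z : Evec a) (w : Evec b)
    (v : Evec b) : Set (Evec a) :=
  {u | (u, -v) ∈ limNormalCone2 (svGraph F) (z, w)}

end
/-- Isolated calmness of the KKT solution map yields uniqueness of the multiplier. -/
theorem unique_multiplier_of_isolatedCalm {n m : ℕ} (Y : Set (Evec m)) (hYne : Y.Nonempty) (hYpoly : IsPolyhedral Y)
    (B : Evec m →L[ℝ] Evec m) (hBsym : ∀ u v : Evec m, ⟪B u, v⟫ = ⟪u, B v⟫)
    (hBpsd : ∀ u : Evec m, 0 ≤ ⟪u, B u⟫)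
    (φ₀ : Evec n → ℝ) (hφ₀ : ContDiff ℝ 2 φ₀)
    (Φ : Evec n → Evec m) (hΦ : ContDiff ℝ 2 Φ)
    (xo : Evec n) (lmo : Evec m)
    (hfeas : thetaY Y B (Φ xo) ≠ ⊤)
    (hkkt : lmo ∈ LagMultCom Y B φ₀ Φ xo)
    (hic : IsolCalm (SKKT Y B φ₀ Φ) ((0, 0) : Evec n × Evec m) (xo, lmo)) :
    LagMultCom Y B φ₀ Φ xo = {lmo} := by
  -- Extract isolated calmness data and specialize to z = (0,0).
  obtain ⟨ℓ, hℓ, U, hU, V, hV, hcalm⟩ := hic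
  have hzero : ∀ w ∈ SKKT Y B φ₀ Φ (0, 0) ∩ V, w = (xo, lmo) := by
    intro w hw
    have h := hcalm (0, 0) (mem_of_mem_nhds hU) w hw
    simp only [sub_self, norm_zero, mul_zero] at h
    have : w - (xo, lmo) = 0 := by
      have := le_antisymm h (norm_nonneg _)
      exact norm_eq_zero.mp this
    exact sub_eq_zero.mp this
  -- Differentiability of the Lagrangian in x.
  have hdiff : ∀ μ : Evec m, Differentiable ℝ (fun x => Lag B φ₀ Φ x μ) := by
    intro μ
    have h1 : Differentiable ℝ φ₀ := hφ₀.differentiable two_ne_zero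
    have h2 : Differentiable ℝ Φ := hΦ.differentiable two_ne_zero
    have h3 : Differentiable ℝ (fun x => (⟪Φ x, μ⟫ : ℝ)) :=
      Differentiable.inner ℝ h2 (differentiable_const μ)
    exact ((h1.add h3).sub (differentiable_const _))
  ext lam
  simp only [Set.mem_singleton_iff]
  constructor
  · intro hlam
    obtain ⟨hg1, hs1⟩ := hkkt
    obtain ⟨hg2, hs2⟩ := hlam
    -- convex combinations lie in LagMultCom
    have hconv : ∀ t : ℝ, 0 ≤ t → t ≤ 1 →
        lmo + t • (lam - lmo) ∈ LagMultCom Y B φ₀ Φ xo := by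
      intro t ht0 ht1
      set μ : Evec m := lmo + t • (lam - lmo) with hμ
      constructor
      · -- gradient part
        have key : (fun x => Lag B φ₀ Φ x μ) =
            (fun x => (1 - t) * Lag B φ₀ Φ x lmo + t * Lag B φ₀ Φ x lam +
              ((1 - t) * ((1 / 2) * ⟪lmo, B lmo⟫) + t * ((1 / 2) * ⟪lam, B lam⟫)
                - (1 / 2) * ⟪μ, B μ⟫)) := by
          funext x
          simp only [Lag, hμ]
          have : (⟪Φ x, lmo + t • (lam - lmo)⟫ : ℝ)
              = (1 - t) * ⟪Φ x, lmo⟫ + t * ⟪Φ x, lam⟫ := by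
            rw [inner_add_right, real_inner_smul_right, inner_sub_right]; ring
          rw [this]; ring
        have hgl1 : HasGradientAt (fun x => Lag B φ₀ Φ x lmo) 0 xo := by
          have := ((hdiff lmo) xo).hasGradientAt
          rwa [hg1] at this
        have hgl2 : HasGradientAt (fun x => Lag B φ₀ Φ x lam) 0 xo := by
          have := ((hdiff lam) xo).hasGradientAt
          rwa [hg2] at this
        have hf1 : HasFDerivAt (fun x => Lag B φ₀ Φ x lmo) (0 : Evec n →L[ℝ] ℝ) xo := by
          have := hasGradientAt_iff_hasFDerivAt.mp hgl1
          rwa [map_zero] at this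
        have hf2 : HasFDerivAt (fun x => Lag B φ₀ Φ x lam) (0 : Evec n →L[ℝ] ℝ) xo := by
          have := hasGradientAt_iff_hasFDerivAt.mp hgl2
          rwa [map_zero] at this
        have hf : HasFDerivAt (fun x => Lag B φ₀ Φ x μ) (0 : Evec n →L[ℝ] ℝ) xo := by
          rw [key]
          have h1 := (hf1.const_mul (1 - t)).add (hf2.const_mul t)
          have h2 := h1.add_const
            ((1 - t) * ((1 / 2) * ⟪lmo, B lmo⟫) + t * ((1 / 2) * ⟪lam, B lam⟫)
              - (1 / 2) * ⟪μ, B μ⟫)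
          simpa using h2
        have := (hasFDerivAt_iff_hasGradientAt.mp hf)
        have h0 := this.gradient
        simpa using h0
      · -- subdifferential part
        intro u
        have e1 := hs1 u
        have e2 := hs2 u
        have hip : (⟪μ, u - Φ xo⟫ : ℝ)
            = (1 - t) * ⟪lmo, u - Φ xo⟫ + t * ⟪lam, u - Φ xo⟫ := by
          rw [hμ, inner_add_left, real_inner_smul_left, inner_sub_left]; ring
        set a : ℝ := ⟪lmo, u - Φ xo⟫
        set b : ℝ := ⟪lam, u - Φ xo⟫
        rcases le_total a b with hab | hab
        · have h1 : (⟪μ, u - Φ xo⟫ : ℝ) ≤ b := by rw [hip]; nlinarith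
          calc thetaY Y B (Φ xo) + ((⟪μ, u - Φ xo⟫ : ℝ) : EReal)
              ≤ thetaY Y B (Φ xo) + ((b : ℝ) : EReal) := by
                exact add_le_add_right (EReal.coe_le_coe_iff.mpr h1) _
            _ ≤ thetaY Y B u := e2
        · have h1 : (⟪μ, u - Φ xo⟫ : ℝ) ≤ a := by rw [hip]; nlinarith
          calc thetaY Y B (Φ xo) + ((⟪μ, u - Φ xo⟫ : ℝ) : EReal)
              ≤ thetaY Y B (Φ xo) + ((a : ℝ) : EReal) := by
                exact add_le_add_right (EReal.coe_le_coe_iff.mpr h1) _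
            _ ≤ thetaY Y B u := e1
    -- choose small t > 0 so that (xo, lmo + t • (lam - lmo)) ∈ V
    obtain ⟨ε, hε, hball⟩ := Metric.mem_nhds_iff.mp hV
    set t : ℝ := min 1 (ε / (2 * (‖lam - lmo‖ + 1))) with htdef
    have hden : (0:ℝ) < 2 * (‖lam - lmo‖ + 1) := by positivity
    have ht0 : 0 < t := lt_min one_pos (by positivity)
    have ht1 : t ≤ 1 := min_le_left _ _
    have hmem := hconv t ht0.le ht1
    set μ : Evec m := lmo + t • (lam - lmo) with hμ
    have hdist : dist (xo, μ) (xo, lmo) < ε := by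
      rw [Prod.dist_eq]
      simp only [dist_self]
      have : dist μ lmo = t * ‖lam - lmo‖ := by
        rw [hμ, dist_eq_norm]
        simp [norm_smul, abs_of_pos ht0]
      have hlt : t * ‖lam - lmo‖ < ε := by
        have h2 : t ≤ ε / (2 * (‖lam - lmo‖ + 1)) := min_le_right _ _
        have h3 : t * ‖lam - lmo‖ ≤ ε / (2 * (‖lam - lmo‖ + 1)) * ‖lam - lmo‖ :=
          mul_le_mul_of_nonneg_right h2 (norm_nonneg _)
        have h4 : ε / (2 * (‖lam - lmo‖ + 1)) * ‖lam - lmo‖ < ε := by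
          rw [div_mul_eq_mul_div, div_lt_iff₀ hden]
          nlinarith [norm_nonneg (lam - lmo)]
        linarith
      simp only [this]
      simp [max_lt_iff, hlt, hε]
    have hVmem : (xo, μ) ∈ V := hball hdist
    have hSK : (xo, μ) ∈ SKKT Y B φ₀ Φ (0, 0) := by
      refine ⟨hmem.1, ?_⟩
      have := hmem.2
      simpa using this
    have := hzero (xo, μ) ⟨hSK, hVmem⟩
    have hμeq : μ = lmo := congrArg Prod.snd this
    have : t • (lam - lmo) = 0 := by
      have := hμeq
      rw [hμ] at this
      simpa using this
    have : lam - lmo = 0 := by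
      rcases smul_eq_zero.mp this with h | h
      · exact absurd h ht0.ne'
      · exact h
    exact sub_eq_zero.mp this
  · intro h
    rw [h]
    exact hkkt
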